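/- Let Γ⃗ be a directed graph on n vertices with every out-degree at most 1 and no vertex of out-degree 0, and suppose 3 divides n. Then the underlying undirected graph has an independent set of size exactly n/3 (i.e., the bound n/3 is not exceeded) if and only if Γ⃗ is a vertex-disjoint union of cyclically directed triangles. -/

import Mathlib

open SimpleGraph

variable {V W : Type*}

/-- Two `Sym2` elements (edges) are vertex-disjoint. -/
def sym2Disjoint (e e' : Sym2 V) : Prop := ∀ v, v ∈ e → v ∉ e'

/-- Edge set of the copy of `G` in `H` given by an (injective) homomorphism. -/
def copyEdges (G : SimpleGraph V) (H : SimpleGraph W) (φ : G →g H) : Set (Sym2 W) :=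
  Sym2.map φ '' G.edgeSet

/-- The edge set `E` is `f`-free. -/
def IsFreeSet (f : Sym2 W → Sym2 W) (E : Set (Sym2 W)) : Prop := ∀ e ∈ E, f e ∉ E

/-- `f` is an edge mapping of `H` with `f e ≠ e` (equivalently `|f e ∩ e| ≤ 1`). -/
def IsEdgeMap (H : SimpleGraph W) (f : Sym2 W → Sym2 W) : Prop :=
  ∀ e ∈ H.edgeSet, f e ∈ H.edgeSet ∧ f e ≠ e

/-- `f` is an edge mapping of `H` with `f e ∩ e = ∅`. -/
def IsDisjEdgeMap (H : SimpleGraph W) (f : Sym2 W → Sym2 W) : Prop :=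
  ∀ e ∈ H.edgeSet, f e ∈ H.edgeSet ∧ sym2Disjoint e (f e)

/-- `H` contains a copy of `G` (as a not necessarily induced subgraph). -/
def Contains (G : SimpleGraph V) (H : SimpleGraph W) : Prop :=
  ∃ φ : G →g H, Function.Injective φ

/-- `H` has no `f`-free copy of `G`. -/
def NoFreeCopy (G : SimpleGraph V) (H : SimpleGraph W) (f : Sym2 W → Sym2 W) : Prop :=
  ∀ φ : G →g H, Function.Injective φ → ¬ IsFreeSet f (copyEdges G H φ)

/-- The Turán number `ex(n, G)`. -/
noncomputable def exNum (n : ℕ) (G : SimpleGraph V) : ℕ :=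
  sSup {m | ∃ H : SimpleGraph (Fin n), H.edgeSet.ncard = m ∧ ¬ Contains G H}

/-- The parameter `h(n, G)`. -/
noncomputable def hNum (n : ℕ) (G : SimpleGraph V) : ℕ :=
  sSup {m | ∃ (H : SimpleGraph (Fin n)) (f : Sym2 (Fin n) → Sym2 (Fin n)),
    H.edgeSet.ncard = m ∧ IsEdgeMap H f ∧ NoFreeCopy G H f}

/-- Independence number. -/
noncomputable def indepNum (G : SimpleGraph V) [Fintype V] : ℕ :=
  sSup {m | ∃ s : Finset V, (∀ v ∈ s, ∀ w ∈ s, ¬ G.Adj v w) ∧ s.card = m}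

/-- The matching `tK₂` on `Fin (2t)`: vertices `2i, 2i+1` are matched. -/
def matching (t : ℕ) : SimpleGraph (Fin (2*t)) :=
  SimpleGraph.fromRel (fun v w => (v : ℕ) / 2 = (w : ℕ) / 2)

/-- The star `K_{1,r}` on `Fin (r+1)`, with center `0`. -/
def starG (r : ℕ) : SimpleGraph (Fin (r+1)) :=
  SimpleGraph.fromRel (fun v _ => v = 0)

section Aux
variable {α : Type*} [DecidableEq α]

private lemma insert_indep {s D : Finset α} {g g' : α → α} {v : α}
    (hvD : v ∈ D)
    (hpres : ∀ u ∈ s \ D, g u ∈ s \ D → g' u = g u)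
    (hvL : ∀ w ∈ s \ D, g v ≠ w)
    (hvR : ∀ w ∈ s \ D, g w ≠ v)
    {S' : Finset α} (hS's : S' ⊆ s \ D)
    (hind : ∀ u ∈ S', ∀ w ∈ S', u ≠ w → g' u ≠ w) :
    ∀ u ∈ insert v S', ∀ w ∈ insert v S', u ≠ w → g u ≠ w := by
  intro u hu w hw hne hgu
  rcases Finset.mem_insert.mp hw with rfl | hwS
  · rcases Finset.mem_insert.mp hu with rfl | huS
    · exact hne rfl
    · exact hvR u (hS's huS) hgu
  · rcases Finset.mem_insert.mp hu with rfl | huS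
    · exact hvL w (hS's hwS) hgu
    · have h2 : g u ∈ s \ D := by rw [hgu]; exact hS's hwS
      exact hind u huS w hwS hne ((hpres u (hS's huS) h2).trans hgu)

private lemma exists_big_indep (s : Finset α) : ∀ g : α → α, (∀ v ∈ s, g v ∈ s) →
    ∃ S : Finset α, S ⊆ s ∧ (∀ u ∈ S, ∀ w ∈ S, u ≠ w → g u ≠ w) ∧
      s.card + (if ∃ v ∈ s, g v = v ∨ g (g (g v)) ≠ v then 1 else 0) ≤ 3 * S.card := by
  classical
  induction s using Finset.strongInduction with
  | _ s ih =>
    intro g hg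
    have hble : ∀ (p : Prop) [Decidable p], (if p then 1 else 0) ≤ 1 := by
      intro p _; split <;> simp
    rcases s.eq_empty_or_nonempty with rfl | hne
    · exact ⟨∅, by simp, by simp, by simp⟩
    by_cases hsrc : ∃ v ∈ s, ∀ u ∈ s, g u ≠ v
    · -- v is a source: delete {v, g v}
      obtain ⟨v, hv, hvsrc⟩ := hsrc
      have hgvv : g v ≠ v := hvsrc v hv
      have hgvs : g v ∈ s := hg v hv
      set D : Finset α := {v, g v} with hD
      have hvD : v ∈ D := by simp [hD]
      have hDs : D ⊆ s := by
        intro x hx; simp [hD] at hx; rcases hx with rfl | rfl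
        · exact hv
        · exact hgvs
      set g' : α → α := fun x => if g x ∈ s \ D then g x else x with hg'def
      have hg'app : ∀ x, g' x = if g x ∈ s \ D then g x else x := fun _ => rfl
      have hg' : ∀ u ∈ s \ D, g' u ∈ s \ D := by
        intro u hu
        by_cases h : g u ∈ s \ D
        · rw [hg'app, if_pos h]; exact h
        · rw [hg'app, if_neg h]; exact hu
      obtain ⟨S', hS's, hS'ind, hS'card⟩ :=
        ih (s \ D) (Finset.sdiff_ssubset hDs ⟨v, hvD⟩) g' hg'
      have hvS' : v ∉ S' := fun h => (Finset.mem_sdiff.mp (hS's h)).2 hvD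
      refine ⟨insert v S', ?_, ?_, ?_⟩
      · intro x hx; rcases Finset.mem_insert.mp hx with rfl | hx
        · exact hv
        · exact (Finset.mem_sdiff.mp (hS's hx)).1
      · refine insert_indep hvD (fun u _ h => by rw [hg'app, if_pos h]) ?_ ?_ hS's hS'ind
        · intro w hw hgw
          exact (Finset.mem_sdiff.mp hw).2 (by simp [hD, ← hgw])
        · intro w hw hgw
          exact hvsrc w (Finset.mem_sdiff.mp hw).1 hgw
      · have hDcard : D.card = 2 := Finset.card_pair (Ne.symm hgvv)
        have h1 : (s \ D).card = s.card - 2 := by rw [Finset.card_sdiff_of_subset hDs, hDcard]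
        have h2 : 2 ≤ s.card := hDcard ▸ Finset.card_le_card hDs
        have h3 := hble (∃ v ∈ s \ D, g' v = v ∨ g' (g' (g' v)) ≠ v)
        have h4 := hble (∃ v ∈ s, g v = v ∨ g (g (g v)) ≠ v)
        rw [Finset.card_insert_of_notMem hvS']
        omega
    · -- no source: g is injective on s
      push_neg at hsrc
      have himg : s.image g = s := by
        apply Finset.Subset.antisymm
        · intro x hx
          obtain ⟨u, hu, rfl⟩ := Finset.mem_image.mp hx
          exact hg u hu
        · intro x hx
          obtain ⟨u, hu, hux⟩ := hsrc x hx
          exact Finset.mem_image.mpr ⟨u, hu, hux⟩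
      have hinj : Set.InjOn g s := Finset.injOn_of_card_image_eq (by rw [himg])
      by_cases hbad : ∃ v ∈ s, g v = v ∨ g (g (g v)) ≠ v
      · obtain ⟨v, hv, hvbad⟩ := hbad
        by_cases h1 : g v = v
        · -- fixed point: delete {v}
          set D : Finset α := {v} with hD
          have hvD : v ∈ D := by simp [hD]
          have hDs : D ⊆ s := by simp [hD, hv]
          have hgmaps : ∀ u ∈ s \ D, g u ∈ s \ D := by
            intro u hu
            obtain ⟨hus, huD⟩ := Finset.mem_sdiff.mp hu
            refine Finset.mem_sdiff.mpr ⟨hg u hus, ?_⟩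
            simp only [hD, Finset.mem_singleton]
            intro hguv
            exact huD (by simp [hD, hinj hus hv (hguv.trans h1.symm)])
          obtain ⟨S', hS's, hS'ind, hS'card⟩ :=
            ih (s \ D) (Finset.sdiff_ssubset hDs ⟨v, hvD⟩) g hgmaps
          have hvS' : v ∉ S' := fun h => (Finset.mem_sdiff.mp (hS's h)).2 hvD
          refine ⟨insert v S', ?_, ?_, ?_⟩
          · intro x hx; rcases Finset.mem_insert.mp hx with rfl | hx
            · exact hv
            · exact (Finset.mem_sdiff.mp (hS's hx)).1
          · refine insert_indep hvD (fun u _ _ => rfl) ?_ ?_ hS's hS'ind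
            · intro w hw hgw
              exact (Finset.mem_sdiff.mp hw).2 (by simp [hD, ← hgw, h1])
            · intro w hw hgw
              exact (Finset.mem_sdiff.mp hw).2
                (by simp [hD, hinj (Finset.mem_sdiff.mp hw).1 hv (hgw.trans h1.symm)])
          · have h1' : (s \ D).card = s.card - 1 := by
              rw [Finset.card_sdiff_of_subset hDs]; simp [hD]
            have h2 : 1 ≤ s.card := Finset.card_pos.mpr hne
            have h3 := hble (∃ v ∈ s \ D, g v = v ∨ g (g (g v)) ≠ v)
            rw [if_pos ⟨v, hv, hvbad⟩, Finset.card_insert_of_notMem hvS']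
            omega
        · have h3 : g (g (g v)) ≠ v := hvbad.resolve_left h1
          have hgvs : g v ∈ s := hg v hv
          by_cases h2 : g (g v) = v
          · -- 2-cycle: delete {v, g v}
            set D : Finset α := {v, g v} with hD
            have hvD : v ∈ D := by simp [hD]
            have hDs : D ⊆ s := by
              intro x hx; simp [hD] at hx; rcases hx with rfl | rfl
              · exact hv
              · exact hgvs
            have hgmaps : ∀ u ∈ s \ D, g u ∈ s \ D := by
              intro u hu
              obtain ⟨hus, huD⟩ := Finset.mem_sdiff.mp hu
              refine Finset.mem_sdiff.mpr ⟨hg u hus, fun hguD => huD ?_⟩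
              simp only [hD, Finset.mem_insert, Finset.mem_singleton] at hguD ⊢
              rcases hguD with hgu | hgu
              · exact Or.inr (hinj hus hgvs (hgu.trans h2.symm))
              · exact Or.inl (hinj hus hv hgu)
            obtain ⟨S', hS's, hS'ind, hS'card⟩ :=
              ih (s \ D) (Finset.sdiff_ssubset hDs ⟨v, hvD⟩) g hgmaps
            have hvS' : v ∉ S' := fun h => (Finset.mem_sdiff.mp (hS's h)).2 hvD
            refine ⟨insert v S', ?_, ?_, ?_⟩
            · intro x hx; rcases Finset.mem_insert.mp hx with rfl | hx
              · exact hv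
              · exact (Finset.mem_sdiff.mp (hS's hx)).1
            · refine insert_indep hvD (fun u _ _ => rfl) ?_ ?_ hS's hS'ind
              · intro w hw hgw
                exact (Finset.mem_sdiff.mp hw).2 (by simp [hD, ← hgw])
              · intro w hw hgw
                exact (Finset.mem_sdiff.mp hw).2
                  (by simp [hD, hinj (Finset.mem_sdiff.mp hw).1 hgvs (hgw.trans h2.symm)])
            · have hDcard : D.card = 2 := Finset.card_pair (Ne.symm h1)
              have hc1 : (s \ D).card = s.card - 2 := by rw [Finset.card_sdiff_of_subset hDs, hDcard]
              have hc2 : 2 ≤ s.card := hDcard ▸ Finset.card_le_card hDs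
              have hb' := hble (∃ v ∈ s \ D, g v = v ∨ g (g (g v)) ≠ v)
              rw [if_pos ⟨v, hv, hvbad⟩, Finset.card_insert_of_notMem hvS']
              omega
          · -- long cycle: delete {v, g v, u} where g u = v
            obtain ⟨u, hus, hguv⟩ := hsrc v hv
            have huv : u ≠ v := fun h => h1 (h ▸ hguv)
            have hugv : u ≠ g v := fun h => h2 (h ▸ hguv)
            set D : Finset α := {v, g v, u} with hD
            have hvD : v ∈ D := by simp [hD]
            have hDs : D ⊆ s := by
              intro x hx; simp [hD] at hx; rcases hx with rfl | rfl | rfl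
              · exact hv
              · exact hgvs
              · exact hus
            set g' : α → α := fun x => if g x ∈ s \ D then g x else x with hg'def
            have hg'app : ∀ x, g' x = if g x ∈ s \ D then g x else x := fun _ => rfl
            have hg' : ∀ w ∈ s \ D, g' w ∈ s \ D := by
              intro w hw
              by_cases h : g w ∈ s \ D
              · rw [hg'app, if_pos h]; exact h
              · rw [hg'app, if_neg h]; exact hw
            obtain ⟨t, hts, hgtu⟩ := hsrc u hus
            have htD : t ∉ D := by
              simp only [hD, Finset.mem_insert, Finset.mem_singleton]
              push_neg
              refine ⟨?_, ?_, ?_⟩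
              · rintro rfl; exact hugv.symm hgtu
              · rintro rfl; exact h3 (by rw [hgtu, hguv])
              · rintro rfl; exact huv (hguv ▸ hgtu.symm)
            have hts' : t ∈ s \ D := Finset.mem_sdiff.mpr ⟨hts, htD⟩
            have hgt' : g' t = t := by
              rw [hg'app, if_neg]
              intro h
              exact (Finset.mem_sdiff.mp h).2 (by simp [hD, hgtu])
            obtain ⟨S', hS's, hS'ind, hS'card⟩ :=
              ih (s \ D) (Finset.sdiff_ssubset hDs ⟨v, hvD⟩) g' hg'
            rw [if_pos ⟨t, hts', Or.inl hgt'⟩] at hS'card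
            have hvS' : v ∉ S' := fun h => (Finset.mem_sdiff.mp (hS's h)).2 hvD
            refine ⟨insert v S', ?_, ?_, ?_⟩
            · intro x hx; rcases Finset.mem_insert.mp hx with rfl | hx
              · exact hv
              · exact (Finset.mem_sdiff.mp (hS's hx)).1
            · refine insert_indep hvD (fun u _ h => by rw [hg'app, if_pos h]) ?_ ?_ hS's hS'ind
              · intro w hw hgw
                exact (Finset.mem_sdiff.mp hw).2 (by simp [hD, ← hgw])
              · intro w hw hgw
                exact (Finset.mem_sdiff.mp hw).2
                  (by simp [hD, hinj (Finset.mem_sdiff.mp hw).1 hus (hgw.trans hguv.symm)])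
            · have hDcard : D.card = 3 := by
                rw [hD]
                rw [Finset.card_insert_of_notMem (by simp; exact ⟨fun h => h1 h.symm, fun h => huv h.symm⟩), Finset.card_pair hugv.symm]
              have hc1 : (s \ D).card = s.card - 3 := by rw [Finset.card_sdiff_of_subset hDs, hDcard]
              have hc2 : 3 ≤ s.card := hDcard ▸ Finset.card_le_card hDs
              rw [if_pos ⟨v, hv, hvbad⟩, Finset.card_insert_of_notMem hvS']
              omega
      · -- all vertices good: delete a triangle
        have hnotbad := hbad
        push_neg at hbad
        obtain ⟨v, hv⟩ := hne
        have h1 : g v ≠ v := (hbad v hv).1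
        have h3 : g (g (g v)) = v := (hbad v hv).2
        have hgvs : g v ∈ s := hg v hv
        have hggvs : g (g v) ∈ s := hg _ hgvs
        have h2 : g (g v) ≠ v := by
          intro h
          apply h1
          have h' : g (g (g v)) = g v := by rw [h]
          rw [h3] at h'; exact h'.symm
        have h4 : g (g v) ≠ g v := fun h => h1 (hinj hgvs hv h)
        set D : Finset α := {v, g v, g (g v)} with hD
        have hvD : v ∈ D := by simp [hD]
        have hDs : D ⊆ s := by
          intro x hx; simp [hD] at hx; rcases hx with rfl | rfl | rfl
          · exact hv
          · exact hgvs
          · exact hggvs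
        have hgmaps : ∀ u ∈ s \ D, g u ∈ s \ D := by
          intro u hu
          obtain ⟨hus, huD⟩ := Finset.mem_sdiff.mp hu
          refine Finset.mem_sdiff.mpr ⟨hg u hus, fun hguD => huD ?_⟩
          simp only [hD, Finset.mem_insert, Finset.mem_singleton] at hguD ⊢
          rcases hguD with hgu | hgu | hgu
          · exact Or.inr (Or.inr (hinj hus hggvs (hgu.trans h3.symm)))
          · exact Or.inl (hinj hus hv hgu)
          · exact Or.inr (Or.inl (hinj hus hgvs hgu))
        obtain ⟨S', hS's, hS'ind, hS'card⟩ :=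
          ih (s \ D) (Finset.sdiff_ssubset hDs ⟨v, hvD⟩) g hgmaps
        have hvS' : v ∉ S' := fun h => (Finset.mem_sdiff.mp (hS's h)).2 hvD
        refine ⟨insert v S', ?_, ?_, ?_⟩
        · intro x hx; rcases Finset.mem_insert.mp hx with rfl | hx
          · exact hv
          · exact (Finset.mem_sdiff.mp (hS's hx)).1
        · refine insert_indep hvD (fun u _ _ => rfl) ?_ ?_ hS's hS'ind
          · intro w hw hgw
            exact (Finset.mem_sdiff.mp hw).2 (by simp [hD, ← hgw])
          · intro w hw hgw
            exact (Finset.mem_sdiff.mp hw).2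
              (by simp [hD, hinj (Finset.mem_sdiff.mp hw).1 hggvs (hgw.trans h3.symm)])
        · have hDcard : D.card = 3 := by
            rw [hD]
            rw [Finset.card_insert_of_notMem (by simp; exact ⟨fun h => h1 h.symm, fun h => h2 h.symm⟩), Finset.card_pair (Ne.symm h4)]
          have hc1 : (s \ D).card = s.card - 3 := by rw [Finset.card_sdiff_of_subset hDs, hDcard]
          have hc2 : 3 ≤ s.card := hDcard ▸ Finset.card_le_card hDs
          have hb' := hble (∃ v ∈ s \ D, g v = v ∨ g (g (g v)) ≠ v)
          rw [if_neg hnotbad, Finset.card_insert_of_notMem hvS']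
          omega

end Aux

/-- for a digraph with all out-degrees exactly 1 (i.e. a function `g`)
on n vertices, 3 ∣ n, the underlying graph has independence number exactly n/3
iff the digraph is a disjoint union of cyclically directed triangles
(i.e. `g` has no fixed points and `g ∘ g ∘ g = id`). -/
theorem stmt2 {n : ℕ} (hn : 3 ∣ n) (g : Fin n → Fin n) :
    _root_.indepNum (SimpleGraph.fromRel (fun v w => g v = w)) = n / 3 ↔
      ∀ v, g v ≠ v ∧ g (g (g v)) = v := by
  unfold _root_.indepNum
  classical
  obtain ⟨k, rfl⟩ := hn
  set G := SimpleGraph.fromRel (fun v w : Fin (3*k) => g v = w) with hG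
  set A := {m | ∃ s : Finset (Fin (3*k)), (∀ v ∈ s, ∀ w ∈ s, ¬ G.Adj v w) ∧ s.card = m} with hA
  have hboundA : ∀ m ∈ A, m ≤ 3*k := by
    rintro m ⟨s, -, rfl⟩
    simpa using Finset.card_le_univ s
  have hbdd : BddAbove A := ⟨3*k, hboundA⟩
  obtain ⟨S, -, hSind, hScard⟩ :=
    exists_big_indep (Finset.univ : Finset (Fin (3*k))) g (by simp)
  have hSA : S.card ∈ A := by
    refine ⟨S, ?_, rfl⟩
    intro v hv w hw hadj
    rw [hG, SimpleGraph.fromRel_adj] at hadj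
    obtain ⟨hne, h | h⟩ := hadj
    · exact hSind v hv w hw hne h
    · exact hSind w hw v hv hne.symm h
  have hcard_univ : (Finset.univ : Finset (Fin (3*k))).card = 3*k := by simp
  have hk3 : 3 * k / 3 = k := Nat.mul_div_cancel_left k (by norm_num)
  rw [hk3]
  constructor
  · intro heq
    by_contra hcon
    push_neg at hcon
    obtain ⟨v, hv⟩ := hcon
    have hbad : ∃ v ∈ (Finset.univ : Finset (Fin (3*k))), g v = v ∨ g (g (g v)) ≠ v := by
      refine ⟨v, Finset.mem_univ v, ?_⟩
      by_cases h : g v = v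
      · exact Or.inl h
      · exact Or.inr (hv h)
    rw [if_pos hbad, hcard_univ] at hScard
    have hle : S.card ≤ sSup A := le_csSup hbdd hSA
    rw [heq] at hle
    omega
  · intro hgood
    -- lower bound
    have hlow : k ≤ sSup A := by
      have h1 : 3 * k ≤ 3 * S.card := by
        rw [hcard_univ] at hScard; omega
      have h2 : k ≤ S.card := by omega
      exact h2.trans (le_csSup hbdd hSA)
    -- upper bound via triangle partition
    set c : Fin (3*k) → Finset (Fin (3*k)) := fun v => {v, g v, g (g v)} with hc
    have hmemc : ∀ v, v ∈ c v := by intro v; simp [hc]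
    have hcc : ∀ v x, x ∈ c v → c x = c v := by
      intro v x hx
      have h3 : g (g (g v)) = v := (hgood v).2
      have h4 : g (g (g (g v))) = g v := congrArg g h3
      simp only [hc, Finset.mem_insert, Finset.mem_singleton] at hx
      rcases hx with rfl | rfl | rfl
      · rfl
      · show ({g v, g (g v), g (g (g v))} : Finset _) = {v, g v, g (g v)}
        rw [h3]; ext y
        simp only [Finset.mem_insert, Finset.mem_singleton]; tauto
      · show ({g (g v), g (g (g v)), g (g (g (g v)))} : Finset _) = {v, g v, g (g v)}
        rw [h4, h3]; ext y
        simp only [Finset.mem_insert, Finset.mem_singleton]; tauto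
    have hdist : ∀ v : Fin (3*k), g v ≠ v ∧ g (g v) ≠ v ∧ g (g v) ≠ g v := by
      intro v
      have h1 := (hgood v).1
      have h3 := (hgood v).2
      refine ⟨h1, ?_, ?_⟩
      · intro h
        apply h1
        have : g (g (g v)) = g v := by rw [h]
        rw [h3] at this; exact this.symm
      · intro h
        apply h1
        have e1 : g (g (g v)) = g (g v) := congrArg g h
        rw [h3, h] at e1; exact e1.symm
    have hc3 : ∀ v, (c v).card = 3 := by
      intro v
      obtain ⟨h1, h2, h4⟩ := hdist v
      show ({v, g v, g (g v)} : Finset _).card = 3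
      exact Finset.card_eq_three.mpr
        ⟨v, g v, g (g v), Ne.symm h1, Ne.symm h2, Ne.symm h4, rfl⟩
    set T : Finset (Finset (Fin (3*k))) := Finset.univ.image c with hT
    have hTdisj : ∀ t1 ∈ T, ∀ t2 ∈ T, t1 ≠ t2 → Disjoint t1 t2 := by
      rintro t1 ht1 t2 ht2 hne
      obtain ⟨a, -, rfl⟩ := Finset.mem_image.mp ht1
      obtain ⟨b, -, rfl⟩ := Finset.mem_image.mp ht2
      rw [Finset.disjoint_left]
      intro x hx1 hx2
      exact hne ((hcc a x hx1).symm.trans (hcc b x hx2))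
    have hTuniv : T.biUnion id = Finset.univ := by
      apply Finset.Subset.antisymm (Finset.subset_univ _)
      intro x _
      exact Finset.mem_biUnion.mpr ⟨c x, Finset.mem_image_of_mem c (Finset.mem_univ x), hmemc x⟩
    have hTcard : 3 * T.card = 3 * k := by
      have h5 : (T.biUnion id).card = ∑ t ∈ T, (id t).card := Finset.card_biUnion hTdisj
      rw [hTuniv, hcard_univ] at h5
      have h6 : ∑ t ∈ T, (id t).card = 3 * T.card := by
        rw [Finset.sum_congr rfl (fun t ht => ?_), Finset.sum_const, smul_eq_mul, mul_comm]
        obtain ⟨a, -, rfl⟩ := Finset.mem_image.mp ht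
        exact hc3 a
      omega
    have hhigh : sSup A ≤ k := by
      have hA0 : (0:ℕ) ∈ A := ⟨∅, by simp, by simp⟩
      apply csSup_le ⟨0, hA0⟩
      rintro m ⟨s, hsind, rfl⟩
      have hinj : Set.InjOn c s := by
        intro a ha b hb hab
        have hb' : b ∈ c a := hab ▸ hmemc b
        simp only [hc, Finset.mem_insert, Finset.mem_singleton] at hb'
        rcases hb' with rfl | rfl | rfl
        · rfl
        · exfalso
          apply hsind a ha (g a) hb
          rw [hG, SimpleGraph.fromRel_adj]
          exact ⟨Ne.symm (hdist a).1, Or.inl rfl⟩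
        · exfalso
          apply hsind (g (g a)) hb a ha
          rw [hG, SimpleGraph.fromRel_adj]
          exact ⟨(hdist a).2.1, Or.inl (hgood a).2⟩
      calc s.card = (s.image c).card := (Finset.card_image_of_injOn hinj).symm
        _ ≤ T.card := Finset.card_le_card (Finset.image_subset_image (Finset.subset_univ s))
        _ = k := by omega
    omega
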